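/- Assume 0 < μν < λ²m². For every z₁ ∈ ℂ, the point (z₁, 0, 0, 0, 0) ∈ ℂ⁵ satisfies V = λ²m⁴, and λ²m⁴ > 2μνm² − μ²ν²/λ²; hence this extremum of V, where z₁ is a pseudomodulus and z₂,…,z₅ vanish, has strictly higher energy than the global minimum value 2μνm² − μ²ν²/λ². -/

import Mathlib

open Complex Filter Topology

/-- CDFM model with `0 < μν < λ²m²`. For every `z₁ ∈ ℂ`, the point
`(z₁, 0, 0, 0, 0)` satisfies `V = λ²m⁴`, and `λ²m⁴ > 2μνm² − μ²ν²/λ²`; hence this extremum,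
where `z₁` is a pseudomodulus and `z₂,…,z₅` vanish, has strictly higher energy than the
global minimum value `2μνm² − μ²ν²/λ²`. -/
theorem cdfm_origin_branch_higher_energy
    (lam mu nu m sig : ℝ)
    (hlam : 0 < lam) (hmu : 0 < mu) (hnu : 0 < nu) (hm : 0 < m) (hsig : 0 < sig)
    (hcond : mu * nu < lam ^ 2 * m ^ 2)
    (W : (Fin 5 → ℂ) → ℂ)
    (hW : ∀ z, W z = (lam : ℂ) * z 0 * (z 3 * z 4 - (m : ℂ) ^ 2) +
      (mu : ℂ) * z 1 * z 3 + (nu : ℂ) * z 2 * z 4 + (sig : ℂ) * (z 4) ^ 3)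
    (V : (Fin 5 → ℂ) → ℝ)
    (hV : ∀ z, V z = ∑ i, ‖fderiv ℂ W z (Pi.single i 1)‖ ^ 2) :
    (∀ z1 : ℂ, V ![z1, 0, 0, 0, 0] = lam ^ 2 * m ^ 4) ∧
    2 * mu * nu * m ^ 2 - mu ^ 2 * nu ^ 2 / lam ^ 2 < lam ^ 2 * m ^ 4 := by
  have hWeq : W = fun z => (lam : ℂ) * z 0 * (z 3 * z 4 - (m : ℂ) ^ 2) +
      (mu : ℂ) * z 1 * z 3 + (nu : ℂ) * z 2 * z 4 + (sig : ℂ) * (z 4 * z 4 * z 4) := by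
    funext z; rw [hW]; ring
  constructor
  · intro z1
    set p : Fin 5 → ℂ := ![z1, 0, 0, 0, 0] with hp
    have h0 := hasFDerivAt_apply (𝕜 := ℂ) (0 : Fin 5) p
    have h1 := hasFDerivAt_apply (𝕜 := ℂ) (1 : Fin 5) p
    have h2 := hasFDerivAt_apply (𝕜 := ℂ) (2 : Fin 5) p
    have h3 := hasFDerivAt_apply (𝕜 := ℂ) (3 : Fin 5) p
    have h4 := hasFDerivAt_apply (𝕜 := ℂ) (4 : Fin 5) p
    have hderiv := ((((h0.const_mul ((lam : ℂ))).mul ((h3.mul h4).sub_const ((m : ℂ) ^ 2))).add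
        ((h1.const_mul ((mu : ℂ))).mul h3)).add
        ((h2.const_mul ((nu : ℂ))).mul h4)).add (((h4.mul h4).mul h4).const_mul ((sig : ℂ)))
    rw [hV, Fin.sum_univ_five, hWeq, HasFDerivAt.fderiv (f := fun z : Fin 5 → ℂ => (lam : ℂ) * z 0 * (z 3 * z 4 - (m : ℂ) ^ 2) +
        (mu : ℂ) * z 1 * z 3 + (nu : ℂ) * z 2 * z 4 + (sig : ℂ) * (z 4 * z 4 * z 4)) hderiv]
    have e0 : p 0 = z1 := rfl
    have e1 : p 1 = 0 := rfl
    have e2 : p 2 = 0 := rfl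
    have e3 : p 3 = 0 := rfl
    have e4 : p 4 = 0 := rfl
    simp only [e0, e1, e2, e3, e4, ContinuousLinearMap.add_apply,
      ContinuousLinearMap.smul_apply, ContinuousLinearMap.proj_apply,
      Pi.single_apply, smul_eq_mul, Pi.mul_apply]
    norm_num [Fin.ext_iff]
    rw [abs_of_pos hlam]
    norm_num
    ring
  · have hl : (0 : ℝ) < lam ^ 2 := by positivity
    have key : mu ^ 2 * nu ^ 2 / lam ^ 2 * lam ^ 2 = mu ^ 2 * nu ^ 2 := by
      field_simp
    nlinarith [key, pow_pos (sub_pos.2 hcond) 2, hl,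
      mul_pos hl (pow_pos (sub_pos.2 hcond) 2)]
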